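/- Let F : [α,β] → C^1([0,1],[0,1]) be a natural family of l-modal maps and fix j ∈ {1,…,l}. Then for every γ ∈ (α,β] the left asymptotic kneading sequence K_j^−(γ) exists, and for every γ ∈ [α,β) the right asymptotic kneading sequence K_j^+(γ) exists: for every n ≥ 0 there are δ > 0 and a word S_n ∈ A_I^n such that for all θ ∈ (0,δ) the first n symbols of K_j(γ−θ) (respectively K_j(γ+θ)) are lap symbols forming exactly the word S_n. Moreover: if γ ∈ (α,β) and K_j(γ) is infinite (all its symbols lap symbols), then K_j^−(γ) = K_j(γ) = K_j^+(γ); and if K_j(γ) = S c_i for some word S ∈ A_I^n and some i ∈ {1,…,l}, then K_j^−(γ) = S l_1 l_2 ⋯ and K_j^+(γ) = S r_1 r_2 ⋯ with l_1, r_1 ∈ {I_i, I_{i+1}}. -/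

import Mathlib

open Set Metric

noncomputable section

/-- Endpoints of the laps of an `l`-modal map with turning points `c`. -/
def lapPts (l : ℕ) (c : Fin l → ℝ) (i : Fin (l + 2)) : ℝ :=
  if h0 : (i : ℕ) = 0 then 0
  else if hl : (i : ℕ) = l + 1 then 1
  else c ⟨(i : ℕ) - 1, by have := i.isLt; omega⟩

/-- The `i`-th (closed) lap of an `l`-modal map with turning points `c`. -/
def lap (l : ℕ) (c : Fin l → ℝ) (i : Fin (l + 1)) : Set ℝ :=
  Icc (lapPts l c i.castSucc) (lapPts l c i.succ)

/-- `f` is an `l`-modal map of `[0,1]` with turning points `c 0 < … < c (l-1)`. -/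
def IsLModal (l : ℕ) (f : ℝ → ℝ) (c : Fin l → ℝ) : Prop :=
  StrictMono c ∧ (∀ i, c i ∈ Ioo (0:ℝ) 1) ∧
  MapsTo f (Icc 0 1) (Icc 0 1) ∧
  f 0 ∈ ({0, 1} : Set ℝ) ∧ f 1 ∈ ({0, 1} : Set ℝ) ∧
  ∃ s : Fin (l + 1) → Bool,
    (∀ i : Fin l, s i.castSucc ≠ s i.succ) ∧
    (∀ i, if s i then StrictMonoOn f (lap l c i) else StrictAntiOn f (lap l c i))

/-- `f` is a `C¹` `l`-modal map with turning points `c`. -/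
def IsC1LModal (l : ℕ) (f : ℝ → ℝ) (c : Fin l → ℝ) : Prop :=
  IsLModal l f c ∧ ContDiff ℝ 1 f ∧
  ∀ x ∈ Icc (0:ℝ) 1, (∀ i, x ≠ c i) → deriv f x ≠ 0

/-- Continuity of the family `γ ↦ F γ` on `[a,b]` with respect to the `C¹` topology. -/
def C1FamilyOn (F : ℝ → ℝ → ℝ) (a b : ℝ) : Prop :=
  ∀ γ₀ ∈ Icc a b, ∀ ε > (0:ℝ), ∃ δ > (0:ℝ), ∀ γ ∈ Icc a b, |γ - γ₀| < δ →
    ∀ x ∈ Icc (0:ℝ) 1, |F γ x - F γ₀ x| < ε ∧ |deriv (F γ) x - deriv (F γ₀) x| < ε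

/-- Symbols: lap symbols `I_1, …, I_{l+1}` (`Sum.inl`) and critical symbols `c_1, …, c_l`
(`Sum.inr`). -/
def MSym (l : ℕ) := Fin (l + 1) ⊕ Fin l

/-- The symbol of the point `x` relative to the turning points `c`. -/
def symAt (l : ℕ) (c : Fin l → ℝ) (x : ℝ) : MSym l :=
  letI := Classical.propDecidable (∃ j, x = c j)
  if h : ∃ j, x = c j then Sum.inr h.choose
  else Sum.inl ⟨(Finset.univ.filter fun i => c i < x).card,
    Nat.lt_succ_of_le (le_trans (Finset.card_filter_le _ _) (by simp))⟩

/-- The `m`-th symbol of the `j`-th kneading sequence `K_j(γ) = ι(f_γ(c_j))`. -/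
def kneadSym (l : ℕ) (F : ℝ → ℝ → ℝ) (c : ℝ → Fin l → ℝ) (γ : ℝ) (j : Fin l)
    (m : ℕ) : MSym l :=
  symAt l (c γ) ((F γ)^[m] (F γ (c γ (j))))

/-- The family is natural: each finite itinerary is attained as a kneading sequence for
only finitely many parameters. -/
def NaturalFamily (l : ℕ) (F : ℝ → ℝ → ℝ) (c : ℝ → Fin l → ℝ) (a b : ℝ) : Prop :=
  ∀ j : Fin l, ∀ n : ℕ, ∀ S : Fin n → Fin (l + 1), ∀ i : Fin l,
    {γ | γ ∈ Icc a b ∧ (∀ k : Fin n, kneadSym l F c γ j k = Sum.inl (S k)) ∧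
      kneadSym l F c γ j n = Sum.inr i}.Finite

/-- `Km` is the left asymptotic kneading sequence `K_j^-(γ)`: for every `n` there is
`δ > 0` such that for `0 < θ < δ` the first `n` symbols of `K_j(γ - θ)` are lap symbols
forming the word `Km 0 ⋯ Km (n-1)`. -/
def LeftAsym (l : ℕ) (F : ℝ → ℝ → ℝ) (c : ℝ → Fin l → ℝ) (a b : ℝ)
    (j : Fin l) (γ : ℝ) (Km : ℕ → Fin (l + 1)) : Prop :=
  ∀ n : ℕ, ∃ δ > (0:ℝ), ∀ θ : ℝ, 0 < θ → θ < δ →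
    γ - θ ∈ Icc a b ∧ ∀ m < n, kneadSym l F c (γ - θ) j m = Sum.inl (Km m)

/-- `Kp` is the right asymptotic kneading sequence `K_j^+(γ)`. -/
def RightAsym (l : ℕ) (F : ℝ → ℝ → ℝ) (c : ℝ → Fin l → ℝ) (a b : ℝ)
    (j : Fin l) (γ : ℝ) (Kp : ℕ → Fin (l + 1)) : Prop :=
  ∀ n : ℕ, ∃ δ > (0:ℝ), ∀ θ : ℝ, 0 < θ → θ < δ →
    γ + θ ∈ Icc a b ∧ ∀ m < n, kneadSym l F c (γ + θ) j m = Sum.inl (Kp m)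

open Filter Topology

variable {l : ℕ} {c : Fin l → ℝ}

lemma lapPts_zero : lapPts l c ⟨0, by omega⟩ = 0 := by simp [lapPts]

lemma lapPts_last : lapPts l c ⟨l+1, by omega⟩ = 1 := by
  simp only [lapPts]; rw [dif_neg (by omega)]; simp

lemma lapPts_mid (m : ℕ) (hm : m < l) : lapPts l c ⟨m+1, by omega⟩ = c ⟨m, hm⟩ := by
  simp only [lapPts]; rw [dif_neg (by omega), dif_neg (by omega)]
  exact congrArg c (Fin.ext (by simp))

lemma lapPts_strictMono (hc : StrictMono c) (h01 : ∀ i, c i ∈ Ioo (0:ℝ) 1) :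
    StrictMono (lapPts l c) := by
  intro i j hij
  have hij' : (i:ℕ) < (j:ℕ) := hij
  have hjl := j.isLt
  have hil := i.isLt
  rcases Nat.eq_zero_or_pos (i:ℕ) with h0 | h0
  · have hi : lapPts l c i = 0 := by
      have : i = (⟨0, by omega⟩ : Fin (l+2)) := by ext; exact h0
      rw [this]; exact lapPts_zero
    rw [hi]
    rcases eq_or_lt_of_le (Nat.le_of_lt_succ hjl) with hj | hj
    · have : j = (⟨l+1, by omega⟩ : Fin (l+2)) := by ext; exact hj
      rw [this, lapPts_last]; norm_num
    · have hj1 : (j:ℕ) - 1 < l := by omega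
      have : j = (⟨((j:ℕ)-1)+1, by omega⟩ : Fin (l+2)) := by ext; simp; omega
      rw [this, lapPts_mid _ hj1]
      exact (h01 _).1
  · have hi1 : (i:ℕ) - 1 < l := by omega
    have hieq : i = (⟨((i:ℕ)-1)+1, by omega⟩ : Fin (l+2)) := by ext; simp; omega
    rw [hieq, lapPts_mid _ hi1]
    rcases eq_or_lt_of_le (Nat.le_of_lt_succ hjl) with hj | hj
    · have : j = (⟨l+1, by omega⟩ : Fin (l+2)) := by ext; exact hj
      rw [this, lapPts_last]; exact (h01 _).2
    · have hj1 : (j:ℕ) - 1 < l := by omega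
      have : j = (⟨((j:ℕ)-1)+1, by omega⟩ : Fin (l+2)) := by ext; simp; omega
      rw [this, lapPts_mid _ hj1]
      exact hc (by simp [Fin.lt_def]; omega)

/-- derivative nonneg if strictly monotone on a left interval -/
lemma deriv_nonneg_left {f : ℝ → ℝ} {p x d : ℝ} (hpx : p < x)
    (hf : StrictMonoOn f (Icc p x)) (hd : HasDerivAt f d x) : 0 ≤ d := by
  have ht : Tendsto (slope f x) (𝓝[<] x) (𝓝 d) :=
    (hasDerivAt_iff_tendsto_slope.1 hd).mono_left
      (nhdsWithin_mono _ (fun y hy => ne_of_lt hy))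
  refine ge_of_tendsto ht ?_
  filter_upwards [Ioo_mem_nhdsLT_of_mem (⟨hpx, le_refl x⟩ : x ∈ Ioc p x)] with y hy
  have h1 : f y < f x := hf ⟨hy.1.le, hy.2.le⟩ ⟨le_refl p |>.trans hpx.le, le_refl x⟩ hy.2
  have h2 : y - x < 0 := by linarith [hy.2]
  rw [slope_def_field]
  exact le_of_lt (div_pos_of_neg_of_neg (by linarith) h2)

lemma deriv_nonpos_left {f : ℝ → ℝ} {p x d : ℝ} (hpx : p < x)
    (hf : StrictAntiOn f (Icc p x)) (hd : HasDerivAt f d x) : d ≤ 0 := by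
  have ht : Tendsto (slope f x) (𝓝[<] x) (𝓝 d) :=
    (hasDerivAt_iff_tendsto_slope.1 hd).mono_left
      (nhdsWithin_mono _ (fun y hy => ne_of_lt hy))
  refine le_of_tendsto ht ?_
  filter_upwards [Ioo_mem_nhdsLT_of_mem (⟨hpx, le_refl x⟩ : x ∈ Ioc p x)] with y hy
  have h1 : f x < f y := hf ⟨hy.1.le, hy.2.le⟩ ⟨hpx.le, le_refl x⟩ hy.2
  have h2 : y - x < 0 := by linarith [hy.2]
  rw [slope_def_field]
  exact le_of_lt (div_neg_of_pos_of_neg (by linarith) h2)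

lemma deriv_nonneg_right {f : ℝ → ℝ} {q x d : ℝ} (hxq : x < q)
    (hf : StrictMonoOn f (Icc x q)) (hd : HasDerivAt f d x) : 0 ≤ d := by
  have ht : Tendsto (slope f x) (𝓝[>] x) (𝓝 d) :=
    (hasDerivAt_iff_tendsto_slope.1 hd).mono_left
      (nhdsWithin_mono _ (fun y hy => ne_of_gt hy))
  refine ge_of_tendsto ht ?_
  filter_upwards [Ioo_mem_nhdsGT_of_mem (⟨le_refl x, hxq⟩ : x ∈ Ico x q)] with y hy
  have h1 : f x < f y := hf ⟨le_refl x, hxq.le⟩ ⟨hy.1.le, hy.2.le⟩ hy.1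
  have h2 : 0 < y - x := by linarith [hy.1]
  rw [slope_def_field]
  exact le_of_lt (div_pos (by linarith) h2)

lemma deriv_nonpos_right {f : ℝ → ℝ} {q x d : ℝ} (hxq : x < q)
    (hf : StrictAntiOn f (Icc x q)) (hd : HasDerivAt f d x) : d ≤ 0 := by
  have ht : Tendsto (slope f x) (𝓝[>] x) (𝓝 d) :=
    (hasDerivAt_iff_tendsto_slope.1 hd).mono_left
      (nhdsWithin_mono _ (fun y hy => ne_of_gt hy))
  refine le_of_tendsto ht ?_
  filter_upwards [Ioo_mem_nhdsGT_of_mem (⟨le_refl x, hxq⟩ : x ∈ Ico x q)] with y hy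
  have h1 : f y < f x := hf ⟨le_refl x, hxq.le⟩ ⟨hy.1.le, hy.2.le⟩ hy.1
  have h2 : 0 < y - x := by linarith [hy.1]
  rw [slope_def_field]
  exact le_of_lt (div_neg_of_neg_of_pos (by linarith) h2)

lemma lapPts_le_of_le (hc : StrictMono c) (h01 : ∀ i, c i ∈ Ioo (0:ℝ) 1)
    {i j : Fin (l+2)} (h : (i:ℕ) ≤ (j:ℕ)) : lapPts l c i ≤ lapPts l c j :=
  (lapPts_strictMono hc h01).monotone (by exact h)

lemma deriv_turning_eq_zero {f : ℝ → ℝ} (hm : IsC1LModal l f c) (i : Fin l) :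
    deriv f (c i) = 0 := by
  obtain ⟨⟨hc, h01, -, -, -, s, hsalt, hslap⟩, hC1, -⟩ := hm
  have hP := lapPts_strictMono hc h01
  have hd : HasDerivAt f (deriv f (c i)) (c i) :=
    ((hC1.differentiable one_ne_zero) (c i)).hasDerivAt
  have hci : lapPts l c ⟨(i:ℕ)+1, by omega⟩ = c i := by
    rw [lapPts_mid _ i.isLt]
  have h1 : lap l c i.castSucc = Icc (lapPts l c ⟨(i:ℕ), by omega⟩) (c i) := by
    unfold lap
    rw [show ((i.castSucc).castSucc : Fin (l+2)) = ⟨(i:ℕ), by omega⟩ from rfl,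
      show ((i.castSucc).succ : Fin (l+2)) = ⟨(i:ℕ)+1, by omega⟩ from rfl, hci]
  have h2 : lap l c i.succ = Icc (c i) (lapPts l c ⟨(i:ℕ)+2, by omega⟩) := by
    unfold lap
    rw [show ((i.succ).castSucc : Fin (l+2)) = ⟨(i:ℕ)+1, by omega⟩ from rfl,
      show ((i.succ).succ : Fin (l+2)) = ⟨(i:ℕ)+2, by omega⟩ from rfl, hci]
  have hlt1 : lapPts l c ⟨(i:ℕ), by omega⟩ < c i := by
    rw [← hci]; exact hP (by simp [Fin.lt_def])
  have hlt2 : c i < lapPts l c ⟨(i:ℕ)+2, by omega⟩ := by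
    rw [← hci]; exact hP (by simp [Fin.lt_def])
  have ha := hslap i.castSucc
  have hb := hslap i.succ
  have halt := hsalt i
  cases hsc : s i.castSucc
  · have hsb : s i.succ = true := by revert halt; rw [hsc]; cases s i.succ <;> simp
    rw [hsc] at ha; rw [hsb] at hb
    simp only [if_true, if_false, Bool.false_eq_true] at ha hb
    rw [h1] at ha; rw [h2] at hb
    exact le_antisymm (deriv_nonpos_left hlt1 ha hd) (deriv_nonneg_right hlt2 hb hd)
  · have hsb : s i.succ = false := by revert halt; rw [hsc]; cases s i.succ <;> simp
    rw [hsc] at ha; rw [hsb] at hb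
    simp only [if_true, if_false, Bool.false_eq_true] at ha hb
    rw [h1] at ha; rw [h2] at hb
    exact le_antisymm (deriv_nonpos_right hlt2 hb hd) (deriv_nonneg_left hlt1 ha hd)

lemma deriv_opposite {f : ℝ → ℝ} (hm : IsC1LModal l f c) (i : Fin l) {p q : ℝ}
    (hp1 : lapPts l c ⟨(i:ℕ), by omega⟩ < p) (hp2 : p < c i)
    (hq1 : c i < q) (hq2 : q < lapPts l c ⟨(i:ℕ)+2, by omega⟩) :
    deriv f p * deriv f q < 0 := by
  obtain ⟨⟨hc, h01, -, -, -, s, hsalt, hslap⟩, hC1, hnz⟩ := hm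
  have hP := lapPts_strictMono hc h01
  have hci : lapPts l c ⟨(i:ℕ)+1, by omega⟩ = c i := by rw [lapPts_mid _ i.isLt]
  have hp0 : (0:ℝ) ≤ p := le_trans (by rw [← @lapPts_zero l c]; exact lapPts_le_of_le hc h01 (by simp)) hp1.le
  have hq1' : q ≤ 1 := le_trans hq2.le (by rw [← @lapPts_last l c]; exact lapPts_le_of_le hc h01 (by simp))
  have hpmem : p ∈ Icc (0:ℝ) 1 := ⟨hp0, le_trans hp2.le (h01 i).2.le⟩
  have hqmem : q ∈ Icc (0:ℝ) 1 := ⟨le_trans (h01 i).1.le hq1.le, hq1'⟩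
  have hpne : ∀ m, p ≠ c m := by
    intro m
    rcases le_or_gt ((m:ℕ)+1) (i:ℕ) with h | h
    · have hcm : lapPts l c ⟨(m:ℕ)+1, by omega⟩ = c m := lapPts_mid (m:ℕ) m.isLt
      have : c m ≤ lapPts l c ⟨(i:ℕ), by omega⟩ := by
        rw [← hcm]; exact lapPts_le_of_le hc h01 (by simpa using h)
      exact fun he => absurd (he ▸ hp1) (not_lt.2 this)
    · have : c i ≤ c m := hc.monotone (by omega)
      exact fun he => absurd (he ▸ hp2) (not_lt.2 this)
  have hqne : ∀ m, q ≠ c m := by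
    intro m
    rcases le_or_gt ((i:ℕ)+1) (m:ℕ) with h | h
    · have hcm : lapPts l c ⟨(m:ℕ)+1, by omega⟩ = c m := lapPts_mid (m:ℕ) m.isLt
      have : lapPts l c ⟨(i:ℕ)+2, by omega⟩ ≤ c m := by
        rw [← hcm]; exact lapPts_le_of_le hc h01 (by simp; omega)
      exact fun he => absurd (he ▸ hq2) (not_lt.2 this)
    · have : c m ≤ c i := hc.monotone (by omega)
      exact fun he => absurd (he ▸ hq1) (not_lt.2 this)
  have hpz : deriv f p ≠ 0 := hnz p hpmem hpne
  have hqz : deriv f q ≠ 0 := hnz q hqmem hqne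
  have hdp : HasDerivAt f (deriv f p) p := ((hC1.differentiable one_ne_zero) p).hasDerivAt
  have hdq : HasDerivAt f (deriv f q) q := ((hC1.differentiable one_ne_zero) q).hasDerivAt
  have h1 : lap l c i.castSucc = Icc (lapPts l c ⟨(i:ℕ), by omega⟩) (c i) := by
    unfold lap
    rw [show ((i.castSucc).castSucc : Fin (l+2)) = ⟨(i:ℕ), by omega⟩ from rfl,
      show ((i.castSucc).succ : Fin (l+2)) = ⟨(i:ℕ)+1, by omega⟩ from rfl, hci]
  have h2 : lap l c i.succ = Icc (c i) (lapPts l c ⟨(i:ℕ)+2, by omega⟩) := by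
    unfold lap
    rw [show ((i.succ).castSucc : Fin (l+2)) = ⟨(i:ℕ)+1, by omega⟩ from rfl,
      show ((i.succ).succ : Fin (l+2)) = ⟨(i:ℕ)+2, by omega⟩ from rfl, hci]
  have ha := hslap i.castSucc
  have hb := hslap i.succ
  have halt := hsalt i
  cases hsc : s i.castSucc
  · have hsb : s i.succ = true := by revert halt; rw [hsc]; cases s i.succ <;> simp
    rw [hsc] at ha; rw [hsb] at hb
    simp only [if_true, if_false, Bool.false_eq_true] at ha hb
    rw [h1] at ha; rw [h2] at hb
    have hdp' : deriv f p < 0 :=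
      lt_of_le_of_ne (deriv_nonpos_left hp1 (ha.mono (Icc_subset_Icc le_rfl hp2.le)) hdp) hpz
    have hdq' : 0 < deriv f q :=
      lt_of_le_of_ne (deriv_nonneg_right hq2 (hb.mono (Icc_subset_Icc hq1.le le_rfl)) hdq) (Ne.symm hqz)
    exact mul_neg_of_neg_of_pos hdp' hdq'
  · have hsb : s i.succ = false := by revert halt; rw [hsc]; cases s i.succ <;> simp
    rw [hsc] at ha; rw [hsb] at hb
    simp only [if_true, if_false, Bool.false_eq_true] at ha hb
    rw [h1] at ha; rw [h2] at hb
    have hdp' : 0 < deriv f p :=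
      lt_of_le_of_ne (deriv_nonneg_left hp1 (ha.mono (Icc_subset_Icc le_rfl hp2.le)) hdp) (Ne.symm hpz)
    have hdq' : deriv f q < 0 :=
      lt_of_le_of_ne (deriv_nonpos_right hq2 (hb.mono (Icc_subset_Icc hq1.le le_rfl)) hdq) hqz
    exact mul_neg_of_pos_of_neg hdp' hdq'

lemma symAt_crit_rw {x : ℝ} (hex : ∃ j, x = c j) :
    symAt l c x = Sum.inr hex.choose := by
  unfold symAt
  exact dif_pos hex

lemma eq_of_symAt_inr {x : ℝ} {i : Fin l} (h : symAt l c x = Sum.inr i) : x = c i := by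
  by_cases hex : ∃ j, x = c j
  · rw [symAt_crit_rw hex] at h
    have := Sum.inr.inj h
    rw [← this]; exact hex.choose_spec
  · unfold symAt at h; simp [hex] at h

lemma symAt_count {x : ℝ} (hne : ∀ k, x ≠ c k) :
    symAt l c x = Sum.inl ⟨(Finset.univ.filter fun i => c i < x).card,
      Nat.lt_succ_of_le (le_trans (Finset.card_filter_le _ _) (by simp))⟩ := by
  unfold symAt
  exact dif_neg (not_exists.mpr hne)

lemma ne_of_symAt_inl {x : ℝ} {t : Fin (l+1)} (h : symAt l c x = Sum.inl t) :
    ∀ k, x ≠ c k := by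
  intro k hk
  rw [symAt_crit_rw ⟨k, hk⟩] at h
  exact absurd h (by simp)

lemma symAt_congr {c' : Fin l → ℝ} {x x' : ℝ} (hne : ∀ k, x ≠ c k) (hne' : ∀ k, x' ≠ c' k)
    (hiff : ∀ k, c k < x ↔ c' k < x') : symAt l c x = symAt l c' x' := by
  rw [symAt_count hne, symAt_count hne']
  have hcard : (Finset.univ.filter fun k => c k < x).card
      = (Finset.univ.filter fun k => c' k < x').card := by
    congr 1; ext k; simp [hiff k]
  exact congrArg Sum.inl (Fin.ext hcard)

lemma symAt_near_crit {c' : Fin l → ℝ} {x : ℝ} (i : Fin l)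
    (hne : ∀ k, x ≠ c' k) (hlt : ∀ k : Fin l, (k:ℕ) < (i:ℕ) → c' k < x)
    (hgt : ∀ k : Fin l, (i:ℕ) < (k:ℕ) → x < c' k) :
    symAt l c' x = Sum.inl i.castSucc ∨ symAt l c' x = Sum.inl i.succ := by
  rw [symAt_count hne]
  rcases lt_or_gt_of_ne (Ne.symm (hne i)) with hci | hci
  · right
    have hset : (Finset.univ.filter fun k => c' k < x) = Finset.Iic i := by
      ext k
      simp only [Finset.mem_filter, Finset.mem_univ, true_and, Finset.mem_Iic]
      constructor
      · intro h
        by_contra hk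
        rw [not_le, Fin.lt_def] at hk
        exact absurd h (not_lt.2 (hgt k hk).le)
      · intro hk
        rcases eq_or_lt_of_le hk with hk' | hk'
        · rw [hk']; exact hci
        · exact hlt k hk'
    refine congrArg Sum.inl (Fin.ext ?_)
    show (Finset.univ.filter fun k => c' k < x).card = _
    rw [hset, Fin.card_Iic]
    simp
  · left
    have hset : (Finset.univ.filter fun k => c' k < x) = Finset.Iio i := by
      ext k
      simp only [Finset.mem_filter, Finset.mem_univ, true_and, Finset.mem_Iio]
      constructor
      · intro h
        by_contra hk
        rw [not_lt, Fin.le_def] at hk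
        rcases eq_or_lt_of_le hk with hk' | hk'
        · have : k = i := Fin.ext hk'.symm
          rw [this] at h
          exact absurd h (not_lt.2 hci.le)
        · exact absurd h (not_lt.2 (hgt k hk').le)
      · intro hk
        exact hlt k hk
    refine congrArg Sum.inl (Fin.ext ?_)
    show (Finset.univ.filter fun k => c' k < x).card = _
    rw [hset, Fin.card_Iio]
    simp

lemma turning_continuous {F : ℝ → ℝ → ℝ} {cc : ℝ → Fin l → ℝ} {a b : ℝ}
    (hfam : C1FamilyOn F a b) (hmodal : ∀ γ ∈ Icc a b, IsC1LModal l (F γ) (cc γ))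
    {γ₀ : ℝ} (hγ₀ : γ₀ ∈ Icc a b) {ε : ℝ} (hε : 0 < ε) :
    ∃ δ > 0, ∀ γ ∈ Icc a b, |γ - γ₀| < δ → ∀ i, |cc γ i - cc γ₀ i| < ε := by
  rcases Nat.eq_zero_or_pos l with hl | hl
  · exact ⟨1, one_pos, fun γ _ _ i => by exact absurd i.isLt (by omega)⟩
  haveI : Nonempty (Fin l) := ⟨⟨0, hl⟩⟩
  obtain ⟨⟨hc, h01, hmaps, -, -, hs⟩, hC1, hnz⟩ := hmodal γ₀ hγ₀
  set c₀ := cc γ₀ with hc₀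
  have hP := lapPts_strictMono hc h01
  have hci : ∀ i : Fin l, lapPts l c₀ ⟨(i:ℕ)+1, by omega⟩ = c₀ i :=
    fun i => lapPts_mid (i:ℕ) i.isLt
  set A : Fin l → ℝ := fun i => lapPts l c₀ ⟨(i:ℕ), by omega⟩ with hA
  set B : Fin l → ℝ := fun i => lapPts l c₀ ⟨(i:ℕ)+2, by omega⟩ with hB
  have hAlt : ∀ i, A i < c₀ i := fun i => by
    rw [← hci i]; exact hP (by simp [Fin.lt_def])
  have hBgt : ∀ i, c₀ i < B i := fun i => by
    rw [← hci i]; exact hP (by simp [Fin.lt_def])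
  set p : Fin l → ℝ := fun i => max (c₀ i - ε/2) ((A i + c₀ i)/2) with hp
  set q : Fin l → ℝ := fun i => min (c₀ i + ε/2) ((c₀ i + B i)/2) with hq
  have hpA : ∀ i, A i < p i := fun i => lt_max_of_lt_right (by linarith [hAlt i])
  have hpc : ∀ i, p i < c₀ i := fun i => max_lt (by linarith) (by linarith [hAlt i])
  have hcq : ∀ i, c₀ i < q i := fun i => lt_min (by linarith) (by linarith [hBgt i])
  have hqB : ∀ i, q i < B i := fun i => min_lt_of_right_lt (by linarith [hBgt i])
  have heps : ∀ i, ∀ y, p i < y → y < q i → |y - c₀ i| < ε := by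
    intro i y h1 h2
    have := le_max_left (c₀ i - ε/2) ((A i + c₀ i)/2)
    have := min_le_left (c₀ i + ε/2) ((c₀ i + B i)/2)
    rw [abs_lt]; constructor <;> nlinarith
  have hdisj : ∀ i j : Fin l, (i:ℕ) < (j:ℕ) → q i ≤ p j := by
    intro i j hij
    have h1 : q i ≤ (c₀ i + B i)/2 := min_le_right _ _
    have h2 : (A j + c₀ j)/2 ≤ p j := le_max_right _ _
    have h3 : c₀ i ≤ A j := by
      rw [← hci i, hA]; exact lapPts_le_of_le hc h01 (by simp; omega)
    have h4 : B i ≤ c₀ j := by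
      rw [← hci j, hB]; exact lapPts_le_of_le hc h01 (by simp; omega)
    linarith
  have hp01 : ∀ i, p i ∈ Icc (0:ℝ) 1 := by
    intro i
    have h0 : (0:ℝ) ≤ A i := by
      rw [hA, ← @lapPts_zero l c₀]; exact lapPts_le_of_le hc h01 (by simp)
    exact ⟨le_trans h0 (hpA i).le, le_trans (hpc i).le (h01 i).2.le⟩
  have hq01 : ∀ i, q i ∈ Icc (0:ℝ) 1 := by
    intro i
    have h1 : B i ≤ 1 := by
      rw [hB, ← @lapPts_last l c₀]; exact lapPts_le_of_le hc h01 (by simp)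
    exact ⟨le_trans (h01 i).1.le (hcq i).le, le_trans (hqB i).le h1⟩
  have hopp : ∀ i, deriv (F γ₀) (p i) * deriv (F γ₀) (q i) < 0 := fun i =>
    deriv_opposite (hmodal γ₀ hγ₀) i (hpA i) (hpc i) (hcq i) (hqB i)
  have hdpne : ∀ i, deriv (F γ₀) (p i) ≠ 0 := by
    intro i h; have := hopp i; rw [h] at this; simp at this
  have hdqne : ∀ i, deriv (F γ₀) (q i) ≠ 0 := by
    intro i h; have := hopp i; rw [h] at this; simp at this
  set m₀ : ℝ := Finset.univ.inf' Finset.univ_nonempty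
    (fun i => min |deriv (F γ₀) (p i)| |deriv (F γ₀) (q i)|) with hm₀
  have hm₀pos : 0 < m₀ := by
    rw [hm₀, Finset.lt_inf'_iff]
    intro i _
    exact lt_min (abs_pos.2 (hdpne i)) (abs_pos.2 (hdqne i))
  have hm₀p : ∀ i, m₀ ≤ |deriv (F γ₀) (p i)| := fun i =>
    le_trans (Finset.inf'_le _ (Finset.mem_univ i)) (min_le_left _ _)
  have hm₀q : ∀ i, m₀ ≤ |deriv (F γ₀) (q i)| := fun i =>
    le_trans (Finset.inf'_le _ (Finset.mem_univ i)) (min_le_right _ _)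
  -- compact set away from the critical intervals
  set K : Set ℝ := Icc 0 1 \ ⋃ i, Ioo (p i) (q i) with hK
  have hKcomp : IsCompact K := isCompact_Icc.diff (isOpen_iUnion fun i => isOpen_Ioo)
  have hKne : K.Nonempty := by
    refine ⟨0, ⟨le_refl 0, zero_le_one⟩, ?_⟩
    simp only [mem_iUnion, mem_Ioo, not_exists, not_and]
    intro i h0
    exact absurd h0 (not_lt.2 (hp01 i).1)
  have hcont₀ : Continuous fun x => |deriv (F γ₀) x| :=
    continuous_abs.comp (hC1.continuous_deriv le_rfl)
  obtain ⟨x₁, hx₁K, hx₁min⟩ := hKcomp.exists_isMinOn hKne hcont₀.continuousOn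
  set m₁ : ℝ := |deriv (F γ₀) x₁| with hm₁
  have hm₁pos : 0 < m₁ := by
    rw [hm₁, abs_pos]
    refine hnz x₁ hx₁K.1 ?_
    intro k hk
    refine hx₁K.2 (mem_iUnion.2 ⟨k, ?_⟩)
    rw [hk]; exact ⟨hpc k, hcq k⟩
  obtain ⟨δ, hδpos, hδ⟩ := hfam γ₀ hγ₀ (min m₀ m₁) (lt_min hm₀pos hm₁pos)
  refine ⟨δ, hδpos, ?_⟩
  intro γ hγ hγδ
  have hclose : ∀ x ∈ Icc (0:ℝ) 1, |deriv (F γ) x - deriv (F γ₀) x| < min m₀ m₁ :=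
    fun x hx => (hδ γ hγ hγδ x hx).2
  obtain ⟨⟨hcγ, h01γ, -, -, -, -⟩, hC1γ, hnzγ⟩ := hmodal γ hγ
  -- (b): every interval contains a turning point of F γ
  have hb : ∀ i : Fin l, ∃ k, cc γ k ∈ Ioo (p i) (q i) := by
    intro i
    have hdp := hclose (p i) (hp01 i)
    have hdq := hclose (q i) (hq01 i)
    have hcder : ContinuousOn (deriv (F γ)) (Icc (p i) (q i)) :=
      (hC1γ.continuous_deriv le_rfl).continuousOn
    have hpq : p i ≤ q i := le_trans (hpc i).le (hcq i).le
    have hzero : ∃ z ∈ Ioo (p i) (q i), deriv (F γ) z = 0 := by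
      rcases mul_neg_iff.1 (hopp i) with ⟨h1, h2⟩ | ⟨h1, h2⟩
      · -- deriv p > 0, deriv q < 0
        have hdp' : 0 < deriv (F γ) (p i) := by
          have := hm₀p i; rw [abs_of_pos h1] at this
          have := lt_min_iff.1 hdp
          rw [abs_lt] at *
          linarith [this.1.1]
        have hdq' : deriv (F γ) (q i) < 0 := by
          have := hm₀q i; rw [abs_of_neg h2] at this
          have h' := (lt_min_iff.1 hdq).1
          rw [abs_lt] at h'
          linarith [h'.2]
        have := intermediate_value_Ioo' hpq hcder
          (show (0:ℝ) ∈ Ioo (deriv (F γ) (q i)) (deriv (F γ) (p i)) from ⟨hdq', hdp'⟩)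
        obtain ⟨z, hz, hz0⟩ := this
        exact ⟨z, hz, hz0⟩
      · have hdp' : deriv (F γ) (p i) < 0 := by
          have := hm₀p i; rw [abs_of_neg h1] at this
          have h' := (lt_min_iff.1 hdp).1
          rw [abs_lt] at h'
          linarith [h'.2]
        have hdq' : 0 < deriv (F γ) (q i) := by
          have := hm₀q i; rw [abs_of_pos h2] at this
          have h' := (lt_min_iff.1 hdq).1
          rw [abs_lt] at h'
          linarith [h'.1]
        have := intermediate_value_Ioo hpq hcder
          (show (0:ℝ) ∈ Ioo (deriv (F γ) (p i)) (deriv (F γ) (q i)) from ⟨hdp', hdq'⟩)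
        obtain ⟨z, hz, hz0⟩ := this
        exact ⟨z, hz, hz0⟩
    obtain ⟨z, hz, hz0⟩ := hzero
    have hz01 : z ∈ Icc (0:ℝ) 1 :=
      ⟨le_trans (hp01 i).1 hz.1.le, le_trans hz.2.le (hq01 i).2⟩
    by_contra hno
    push_neg at hno
    have : ∀ k, z ≠ cc γ k := by
      intro k hk
      exact hno k (hk ▸ hz)
    exact hnzγ z hz01 this hz0
  -- (a): every turning point of F γ lies in some interval
  have ha : ∀ k : Fin l, ∃ i, cc γ k ∈ Ioo (p i) (q i) := by
    intro k
    by_contra hno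
    push_neg at hno
    have hzK : cc γ k ∈ K := by
      refine ⟨⟨(h01γ k).1.le, (h01γ k).2.le⟩, ?_⟩
      simp only [mem_iUnion, not_exists]
      exact hno
    have h1 : m₁ ≤ |deriv (F γ₀) (cc γ k)| := isMinOn_iff.1 hx₁min _ hzK
    have h2 : deriv (F γ) (cc γ k) = 0 := deriv_turning_eq_zero (hmodal γ hγ) k
    have h3 := hclose (cc γ k) ⟨(h01γ k).1.le, (h01γ k).2.le⟩
    rw [h2] at h3
    have := (lt_min_iff.1 h3).2
    rw [abs_sub_comm, sub_zero] at this
    linarith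
  -- match up the intervals
  choose σ hσ using hb
  choose τ hτ using ha
  have hIoodisj : ∀ i j : Fin l, i ≠ j → ∀ x, x ∈ Ioo (p i) (q i) → x ∉ Ioo (p j) (q j) := by
    intro i j hij x hxi hxj
    rcases Nat.lt_or_ge (i:ℕ) (j:ℕ) with h | h
    · have := hdisj i j h; linarith [hxi.2, hxj.1]
    · have hji : (j:ℕ) < (i:ℕ) := by
        rcases Nat.eq_or_lt_of_le h with h' | h'
        · exact absurd (Fin.ext h'.symm) hij
        · omega
      have := hdisj j i hji; linarith [hxj.2, hxi.1]
  have hτσ : ∀ i, τ (σ i) = i := by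
    intro i
    by_contra hne
    exact hIoodisj _ _ hne _ (hτ (σ i)) (hσ i)
  have hτsurj : Function.Surjective τ := fun i => ⟨σ i, hτσ i⟩
  have hτinj : Function.Injective τ := (Finite.injective_iff_surjective (α := Fin l)).2 hτsurj
  have hτmono : StrictMono τ := by
    intro k k' hkk'
    have hck : cc γ k < cc γ k' := hcγ hkk'
    rcases lt_trichotomy (τ k) (τ k') with h | h | h
    · exact h
    · exact absurd (hτinj h) (ne_of_lt hkk')
    · have hd := hdisj (τ k') (τ k) h
      have := (hτ k).1
      have := (hτ k').2
      linarith
  have hτid : τ = id := by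
    have h1 : Set.range τ = Set.range (id : Fin l → Fin l) := by
      rw [Set.range_id]
      exact Set.range_eq_univ.2 hτsurj
    exact @Set.range_injOn_strictMono (Fin l) (Fin l) _ _
      (inferInstanceAs (WellFoundedLT (Fin l))) τ hτmono id strictMono_id h1
  intro i
  have hmem : cc γ i ∈ Ioo (p i) (q i) := by
    have := hτ i
    rw [hτid] at this
    exact this
  exact heps i _ hmem.1 hmem.2

section Family

variable {F : ℝ → ℝ → ℝ} {cc : ℝ → Fin l → ℝ} {a b : ℝ}

lemma orbit_mem (hmodal : ∀ γ ∈ Icc a b, IsC1LModal l (F γ) (cc γ))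
    {γ : ℝ} (hγ : γ ∈ Icc a b) (j : Fin l) (m : ℕ) :
    (F γ)^[m] (F γ (cc γ j)) ∈ Icc (0:ℝ) 1 := by
  induction m with
  | zero =>
    exact (hmodal γ hγ).1.2.2.1 ⟨((hmodal γ hγ).1.2.1 j).1.le, ((hmodal γ hγ).1.2.1 j).2.le⟩
  | succ m ih =>
    rw [Function.iterate_succ_apply']
    exact (hmodal γ hγ).1.2.2.1 ih

lemma comp_cont (hfam : C1FamilyOn F a b)
    (hmodal : ∀ γ ∈ Icc a b, IsC1LModal l (F γ) (cc γ))
    {γ₀ : ℝ} (hγ₀ : γ₀ ∈ Icc a b) {g : ℝ → ℝ}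
    (hg : ∀ ε > (0:ℝ), ∃ δ > (0:ℝ), ∀ γ ∈ Icc a b, |γ - γ₀| < δ → |g γ - g γ₀| < ε)
    (hg01 : ∀ γ ∈ Icc a b, g γ ∈ Icc (0:ℝ) 1) :
    ∀ ε > (0:ℝ), ∃ δ > (0:ℝ), ∀ γ ∈ Icc a b, |γ - γ₀| < δ →
      |F γ (g γ) - F γ₀ (g γ₀)| < ε := by
  intro ε hε
  obtain ⟨δ₁, hδ₁pos, hδ₁⟩ := hfam γ₀ hγ₀ (ε/2) (by linarith)
  have hcontF : Continuous (F γ₀) := (hmodal γ₀ hγ₀).2.1.continuous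
  obtain ⟨δ₂, hδ₂pos, hδ₂⟩ := Metric.continuous_iff.1 hcontF (g γ₀) (ε/2) (by linarith)
  obtain ⟨δ₃, hδ₃pos, hδ₃⟩ := hg δ₂ hδ₂pos
  refine ⟨min δ₁ δ₃, lt_min hδ₁pos hδ₃pos, ?_⟩
  intro γ hγ hγd
  have h1 : |F γ (g γ) - F γ₀ (g γ)| < ε/2 :=
    (hδ₁ γ hγ (lt_of_lt_of_le hγd (min_le_left _ _)) (g γ) (hg01 γ hγ)).1
  have h2 : dist (F γ₀ (g γ)) (F γ₀ (g γ₀)) < ε/2 := by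
    refine hδ₂ (g γ) ?_
    rw [Real.dist_eq]
    exact hδ₃ γ hγ (lt_of_lt_of_le hγd (min_le_right _ _))
  rw [Real.dist_eq] at h2
  calc |F γ (g γ) - F γ₀ (g γ₀)|
      ≤ |F γ (g γ) - F γ₀ (g γ)| + |F γ₀ (g γ) - F γ₀ (g γ₀)| := abs_sub_le _ _ _
    _ < ε := by linarith

lemma orbit_cont (hfam : C1FamilyOn F a b)
    (hmodal : ∀ γ ∈ Icc a b, IsC1LModal l (F γ) (cc γ))
    {γ₀ : ℝ} (hγ₀ : γ₀ ∈ Icc a b) (j : Fin l) (m : ℕ) :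
    ∀ ε > (0:ℝ), ∃ δ > (0:ℝ), ∀ γ ∈ Icc a b, |γ - γ₀| < δ →
      |(F γ)^[m] (F γ (cc γ j)) - (F γ₀)^[m] (F γ₀ (cc γ₀ j))| < ε := by
  induction m with
  | zero =>
    simp only [Function.iterate_zero_apply]
    refine comp_cont hfam hmodal hγ₀ ?_ ?_
    · intro ε hε
      obtain ⟨δ, hδpos, hδ⟩ := turning_continuous hfam hmodal hγ₀ hε
      exact ⟨δ, hδpos, fun γ hγ hγd => hδ γ hγ hγd j⟩
    · exact fun γ hγ => ⟨((hmodal γ hγ).1.2.1 j).1.le, ((hmodal γ hγ).1.2.1 j).2.le⟩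
  | succ m ih =>
    simp only [Function.iterate_succ_apply']
    exact comp_cont hfam hmodal hγ₀ ih (fun γ hγ => orbit_mem hmodal hγ j m)

lemma knead_loccst (hfam : C1FamilyOn F a b)
    (hmodal : ∀ γ ∈ Icc a b, IsC1LModal l (F γ) (cc γ))
    {γ₀ : ℝ} (hγ₀ : γ₀ ∈ Icc a b) (j : Fin l) (m : ℕ)
    (hne : ∀ k, (F γ₀)^[m] (F γ₀ (cc γ₀ j)) ≠ cc γ₀ k) :
    ∃ δ > (0:ℝ), ∀ γ ∈ Icc a b, |γ - γ₀| < δ →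
      kneadSym l F cc γ j m = kneadSym l F cc γ₀ j m := by
  rcases Nat.eq_zero_or_pos l with hl | hl
  · refine ⟨1, one_pos, fun γ hγ hγd => ?_⟩
    show symAt l (cc γ) _ = symAt l (cc γ₀) _
    exact symAt_congr (fun k => absurd k.isLt (by omega)) (fun k => absurd k.isLt (by omega))
      (fun k => absurd k.isLt (by omega))
  haveI : Nonempty (Fin l) := ⟨⟨0, hl⟩⟩
  set x₀ := (F γ₀)^[m] (F γ₀ (cc γ₀ j)) with hx₀
  set ε₀ : ℝ := (Finset.univ.inf' Finset.univ_nonempty fun k => |x₀ - cc γ₀ k|) / 2 with hε₀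
  have hε₀pos : 0 < ε₀ := by
    rw [hε₀]
    refine div_pos ?_ two_pos
    rw [Finset.lt_inf'_iff]
    exact fun k _ => abs_pos.2 (sub_ne_zero.2 (hne k))
  have hε₀le : ∀ k, 2 * ε₀ ≤ |x₀ - cc γ₀ k| := by
    intro k
    rw [hε₀]
    have := Finset.inf'_le (fun k => |x₀ - cc γ₀ k|) (Finset.mem_univ k)
    linarith
  obtain ⟨δ₁, hδ₁pos, hδ₁⟩ := orbit_cont hfam hmodal hγ₀ j m ε₀ hε₀pos
  obtain ⟨δ₂, hδ₂pos, hδ₂⟩ := turning_continuous hfam hmodal hγ₀ hε₀pos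
  refine ⟨min δ₁ δ₂, lt_min hδ₁pos hδ₂pos, ?_⟩
  intro γ hγ hγd
  have hx : |(F γ)^[m] (F γ (cc γ j)) - x₀| < ε₀ :=
    hδ₁ γ hγ (lt_of_lt_of_le hγd (min_le_left _ _))
  have hcγ : ∀ k, |cc γ k - cc γ₀ k| < ε₀ :=
    hδ₂ γ hγ (lt_of_lt_of_le hγd (min_le_right _ _))
  set x := (F γ)^[m] (F γ (cc γ j)) with hxdef
  have hxne : ∀ k, x ≠ cc γ k := by
    intro k he
    have h1 := hε₀le k
    have h2 := hcγ k
    rw [abs_lt] at h2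
    have h3 := hx
    rw [abs_lt] at h3
    rw [he] at h3
    rcases abs_cases (x₀ - cc γ₀ k) with ⟨h4, _⟩ | ⟨h4, _⟩ <;> rw [h4] at h1 <;> linarith
  have hiff : ∀ k, cc γ₀ k < x₀ ↔ cc γ k < x := by
    intro k
    have h1 := hε₀le k
    have h2 := hcγ k
    have hx' := hx
    rw [abs_lt] at hx' h2
    constructor
    · intro h
      have h3 : |x₀ - cc γ₀ k| = x₀ - cc γ₀ k := abs_of_pos (by linarith)
      rw [h3] at h1
      linarith
    · intro h
      by_contra hcon
      push_neg at hcon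
      rcases abs_cases (x₀ - cc γ₀ k) with ⟨h4, _⟩ | ⟨h4, _⟩ <;> rw [h4] at h1 <;> linarith
  show symAt l (cc γ) x = symAt l (cc γ₀) x₀
  exact (symAt_congr hne hxne hiff).symm

end Family

lemma const_of_loc {α : Type _} {f : ℝ → α} {s : Set ℝ} (hs : IsPreconnected s)
    (h : ∀ x ∈ s, ∃ ε > (0:ℝ), ∀ y ∈ s, |y - x| < ε → f y = f x)
    {x y : ℝ} (hx : x ∈ s) (hy : y ∈ s) : f x = f y := by
  choose! ε hεpos hε using h
  set u : Set ℝ := ⋃ (z : ℝ) (_ : z ∈ s) (_ : f z = f x), ball z (ε z) with hu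
  set v : Set ℝ := ⋃ (z : ℝ) (_ : z ∈ s) (_ : f z ≠ f x), ball z (ε z) with hv
  have hou : IsOpen u := isOpen_iUnion fun z => isOpen_iUnion fun hz => isOpen_iUnion fun _ => isOpen_ball
  have hov : IsOpen v := isOpen_iUnion fun z => isOpen_iUnion fun hz => isOpen_iUnion fun _ => isOpen_ball
  have hcov : s ⊆ u ∪ v := by
    intro z hz
    by_cases hfz : f z = f x
    · exact Or.inl (mem_iUnion.2 ⟨z, mem_iUnion.2 ⟨hz, mem_iUnion.2 ⟨hfz, mem_ball_self (hεpos z hz)⟩⟩⟩)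
    · exact Or.inr (mem_iUnion.2 ⟨z, mem_iUnion.2 ⟨hz, mem_iUnion.2 ⟨hfz, mem_ball_self (hεpos z hz)⟩⟩⟩)
  have hdisj : s ∩ (u ∩ v) = ∅ := by
    rw [eq_empty_iff_forall_notMem]
    rintro w ⟨hws, hwu, hwv⟩
    obtain ⟨z₁, hz₁⟩ := mem_iUnion.1 hwu
    obtain ⟨hz₁s, hz₁'⟩ := mem_iUnion.1 hz₁
    obtain ⟨hfz₁, hwball₁⟩ := mem_iUnion.1 hz₁'
    obtain ⟨z₂, hz₂⟩ := mem_iUnion.1 hwv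
    obtain ⟨hz₂s, hz₂'⟩ := mem_iUnion.1 hz₂
    obtain ⟨hfz₂, hwball₂⟩ := mem_iUnion.1 hz₂'
    have e1 : f w = f z₁ := hε z₁ hz₁s w hws (by rwa [mem_ball, Real.dist_eq] at hwball₁)
    have e2 : f w = f z₂ := hε z₂ hz₂s w hws (by rwa [mem_ball, Real.dist_eq] at hwball₂)
    exact hfz₂ (e2 ▸ e1 ▸ hfz₁)
  have hxu : x ∈ s ∩ u :=
    ⟨hx, mem_iUnion.2 ⟨x, mem_iUnion.2 ⟨hx, mem_iUnion.2 ⟨rfl, mem_ball_self (hεpos x hx)⟩⟩⟩⟩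
  have hyv : y ∉ v := by
    intro hyv
    have := hs u v hou hov hcov ⟨x, hxu⟩ ⟨y, hy, hyv⟩
    rw [hdisj] at this
    exact this.ne_empty rfl
  rcases hcov hy with hyu | hyv'
  · obtain ⟨z, hz⟩ := mem_iUnion.1 hyu
    obtain ⟨hzs, hz'⟩ := mem_iUnion.1 hz
    obtain ⟨hfz, hball⟩ := mem_iUnion.1 hz'
    have : f y = f z := hε z hzs y hy (by rwa [mem_ball, Real.dist_eq] at hball)
    rw [this, hfz]
  · exact absurd hyv' hyv

lemma avoid_finite {B : Set ℝ} (hB : B.Finite) (γ : ℝ) :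
    ∃ δ > (0:ℝ), ∀ x, |x - γ| < δ → x ≠ γ → x ∉ B := by
  have h1 : IsClosed (B \ {γ}) := (hB.subset diff_subset).isClosed
  have h2 : γ ∈ (B \ {γ})ᶜ := fun h => h.2 rfl
  obtain ⟨δ, hδpos, hδ⟩ := Metric.isOpen_iff.1 h1.isOpen_compl γ h2
  exact ⟨δ, hδpos, fun x hx hne hB' =>
    hδ (show x ∈ ball γ δ by rwa [mem_ball, Real.dist_eq]) ⟨hB', hne⟩⟩

section Family2

variable {F : ℝ → ℝ → ℝ} {cc : ℝ → Fin l → ℝ} {a b : ℝ}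

lemma badset_finite (hnat : NaturalFamily l F cc a b) (j : Fin l) (n : ℕ) :
    {γ | γ ∈ Icc a b ∧ ∃ m < n, ∃ i, kneadSym l F cc γ j m = Sum.inr i}.Finite := by
  classical
  have hsub : {γ | γ ∈ Icc a b ∧ ∃ m < n, ∃ i, kneadSym l F cc γ j m = Sum.inr i} ⊆
      ⋃ (m : Fin n) (S : Fin (m:ℕ) → Fin (l+1)) (i : Fin l),
        {γ | γ ∈ Icc a b ∧ (∀ k : Fin (m:ℕ), kneadSym l F cc γ j k = Sum.inl (S k)) ∧
          kneadSym l F cc γ j (m:ℕ) = Sum.inr i} := by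
    rintro γ ⟨hγ, hex⟩
    have hex' : ∃ m, m < n ∧ ∃ i, kneadSym l F cc γ j m = Sum.inr i := by
      obtain ⟨m, hm, hi⟩ := hex; exact ⟨m, hm, hi⟩
    have hfind : ∃ m, ∃ i, kneadSym l F cc γ j m = Sum.inr i :=
      ⟨hex'.choose, hex'.choose_spec.2⟩
    set m₀ := Nat.find hfind with hm₀
    have hm₀spec := Nat.find_spec hfind
    have hm₀lt : m₀ < n := by
      have hle : m₀ ≤ hex'.choose := Nat.find_le hex'.choose_spec.2
      exact lt_of_le_of_lt hle hex'.choose_spec.1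
    have hprev : ∀ k < m₀, ∀ i, kneadSym l F cc γ j k ≠ Sum.inr i := by
      intro k hk i hki
      exact Nat.find_min hfind hk ⟨i, hki⟩
    set S : Fin m₀ → Fin (l+1) := fun k =>
      Sum.elim id (fun _ => ⟨0, Nat.succ_pos l⟩) (kneadSym l F cc γ j k) with hS
    have hSspec : ∀ k : Fin m₀, kneadSym l F cc γ j k = Sum.inl (S k) := by
      intro k
      rcases hksym : kneadSym l F cc γ j k with t | i
      · rw [hS]; simp [hksym]; rfl
      · exact absurd hksym (hprev k k.isLt i)
    refine mem_iUnion.2 ⟨⟨m₀, hm₀lt⟩, mem_iUnion.2 ⟨S, mem_iUnion.2 ⟨hm₀spec.choose, ?_⟩⟩⟩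
    exact ⟨hγ, hSspec, hm₀spec.choose_spec⟩
  refine Set.Finite.subset ?_ hsub
  refine Set.finite_iUnion fun m => Set.finite_iUnion fun S => Set.finite_iUnion fun i => ?_
  exact hnat j (m:ℕ) S i

lemma knead_const_Ioo (hfam : C1FamilyOn F a b)
    (hmodal : ∀ γ ∈ Icc a b, IsC1LModal l (F γ) (cc γ))
    {u v : ℝ} (hsub : Ioo u v ⊆ Icc a b) (j : Fin l) (m : ℕ)
    (hgood : ∀ γ ∈ Ioo u v, ∀ k, (F γ)^[m] (F γ (cc γ j)) ≠ cc γ k) :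
    ∀ x ∈ Ioo u v, ∀ y ∈ Ioo u v, kneadSym l F cc x j m = kneadSym l F cc y j m := by
  intro x hx y hy
  refine const_of_loc (f := fun x => kneadSym l F cc x j m) isPreconnected_Ioo ?_ hx hy
  intro z hz
  obtain ⟨δ, hδpos, hδ⟩ := knead_loccst hfam hmodal (hsub hz) j m (hgood z hz)
  exact ⟨δ, hδpos, fun w hw hwz => hδ w (hsub hw) hwz⟩

lemma noncrit_of_not_bad {γ : ℝ} (j : Fin l) {m n : ℕ} (hmn : m < n) (hγ : γ ∈ Icc a b)
    (hnb : γ ∉ {γ | γ ∈ Icc a b ∧ ∃ m < n, ∃ i, kneadSym l F cc γ j m = Sum.inr i}) :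
    ∀ k, (F γ)^[m] (F γ (cc γ j)) ≠ cc γ k := by
  intro k heq
  exact hnb ⟨hγ, m, hmn, ⟨_, symAt_crit_rw (c := cc γ) ⟨k, heq⟩⟩⟩

lemma left_symbol (hfam : C1FamilyOn F a b)
    (hmodal : ∀ γ ∈ Icc a b, IsC1LModal l (F γ) (cc γ))
    (hnat : NaturalFamily l F cc a b) (j : Fin l) {γ : ℝ} (hγa : a < γ) (hγb : γ ≤ b) (m : ℕ) :
    ∃ t : Fin (l+1), ∃ δ > (0:ℝ), ∀ θ : ℝ, 0 < θ → θ < δ →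
      γ - θ ∈ Icc a b ∧ kneadSym l F cc (γ - θ) j m = Sum.inl t := by
  obtain ⟨δ₀, hδ₀pos, hδ₀⟩ := avoid_finite (badset_finite hnat j (m+1)) γ
  set δ := min (γ - a) δ₀ with hδdef
  have hδpos : 0 < δ := lt_min (by linarith) hδ₀pos
  have hIsub : Ioo (γ - δ) γ ⊆ Icc a b := by
    intro w hw
    constructor
    · have : δ ≤ γ - a := min_le_left _ _
      linarith [hw.1]
    · linarith [hw.2]
  have hgood : ∀ w ∈ Ioo (γ - δ) γ, ∀ k, (F w)^[m] (F w (cc w j)) ≠ cc w k := by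
    intro w hw
    refine noncrit_of_not_bad j (Nat.lt_succ_self m) (hIsub hw) ?_
    refine hδ₀ w ?_ (ne_of_lt hw.2)
    rw [abs_lt]
    constructor
    · have : δ ≤ δ₀ := min_le_right _ _
      linarith [hw.1]
    · linarith [hw.2, hδ₀pos]
  have hmem₀ : γ - δ/2 ∈ Ioo (γ - δ) γ := ⟨by linarith, by linarith⟩
  rcases hsym : kneadSym l F cc (γ - δ/2) j m with t | i
  · refine ⟨t, δ, hδpos, ?_⟩
    intro θ hθ1 hθ2
    have hmemθ : γ - θ ∈ Ioo (γ - δ) γ := ⟨by linarith, by linarith⟩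
    refine ⟨hIsub hmemθ, ?_⟩
    rw [knead_const_Ioo hfam hmodal hIsub j m hgood _ hmemθ _ hmem₀, hsym]
  · exact absurd (eq_of_symAt_inr hsym) (hgood _ hmem₀ i)

lemma right_symbol (hfam : C1FamilyOn F a b)
    (hmodal : ∀ γ ∈ Icc a b, IsC1LModal l (F γ) (cc γ))
    (hnat : NaturalFamily l F cc a b) (j : Fin l) {γ : ℝ} (hγa : a ≤ γ) (hγb : γ < b) (m : ℕ) :
    ∃ t : Fin (l+1), ∃ δ > (0:ℝ), ∀ θ : ℝ, 0 < θ → θ < δ →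
      γ + θ ∈ Icc a b ∧ kneadSym l F cc (γ + θ) j m = Sum.inl t := by
  obtain ⟨δ₀, hδ₀pos, hδ₀⟩ := avoid_finite (badset_finite hnat j (m+1)) γ
  set δ := min (b - γ) δ₀ with hδdef
  have hδpos : 0 < δ := lt_min (by linarith) hδ₀pos
  have hIsub : Ioo γ (γ + δ) ⊆ Icc a b := by
    intro w hw
    constructor
    · linarith [hw.1]
    · have : δ ≤ b - γ := min_le_left _ _
      linarith [hw.2]
  have hgood : ∀ w ∈ Ioo γ (γ + δ), ∀ k, (F w)^[m] (F w (cc w j)) ≠ cc w k := by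
    intro w hw
    refine noncrit_of_not_bad j (Nat.lt_succ_self m) (hIsub hw) ?_
    refine hδ₀ w ?_ (ne_of_gt hw.1)
    rw [abs_lt]
    constructor
    · linarith [hw.1, hδ₀pos]
    · have : δ ≤ δ₀ := min_le_right _ _
      linarith [hw.2]
  have hmem₀ : γ + δ/2 ∈ Ioo γ (γ + δ) := ⟨by linarith, by linarith⟩
  rcases hsym : kneadSym l F cc (γ + δ/2) j m with t | i
  · refine ⟨t, δ, hδpos, ?_⟩
    intro θ hθ1 hθ2
    have hmemθ : γ + θ ∈ Ioo γ (γ + δ) := ⟨by linarith, by linarith⟩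
    refine ⟨hIsub hmemθ, ?_⟩
    rw [knead_const_Ioo hfam hmodal hIsub j m hgood _ hmemθ _ hmem₀, hsym]
  · exact absurd (eq_of_symAt_inr hsym) (hgood _ hmem₀ i)

end Family2
/-- In a natural family of `l`-modal maps all asymptotic kneading sequences exist; if
`K_j(γ)` is infinite they coincide with it, and if `K_j(γ) = S c_i` then both asymptotic
sequences start with `S` followed by a symbol in `{I_i, I_{i+1}}`. -/
theorem asymptotic_kneading_sequences
    (l : ℕ) (F : ℝ → ℝ → ℝ) (c : ℝ → Fin l → ℝ) (a b : ℝ) (hab : a < b)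
    (hfam : C1FamilyOn F a b)
    (hmodal : ∀ γ ∈ Icc a b, IsC1LModal l (F γ) (c γ))
    (hnat : NaturalFamily l F c a b) (j : Fin l) :
    (∀ γ ∈ Ioc a b, ∃ Km : ℕ → Fin (l + 1), LeftAsym l F c a b j γ Km) ∧
    (∀ γ ∈ Ico a b, ∃ Kp : ℕ → Fin (l + 1), RightAsym l F c a b j γ Kp) ∧
    (∀ γ ∈ Ioo a b, (∀ m : ℕ, ∃ t : Fin (l + 1), kneadSym l F c γ j m = Sum.inl t) →
      ∃ Km Kp : ℕ → Fin (l + 1),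
        LeftAsym l F c a b j γ Km ∧ RightAsym l F c a b j γ Kp ∧
        ∀ m : ℕ, Sum.inl (Km m) = kneadSym l F c γ j m ∧
          Sum.inl (Kp m) = kneadSym l F c γ j m) ∧
    (∀ γ ∈ Icc a b, ∀ n : ℕ, ∀ S : Fin n → Fin (l + 1), ∀ i : Fin l,
      (∀ k : Fin n, kneadSym l F c γ j k = Sum.inl (S k)) →
      kneadSym l F c γ j n = Sum.inr i →
      (γ = a ∨ ∃ Km : ℕ → Fin (l + 1), LeftAsym l F c a b j γ Km ∧
        (∀ k : Fin n, Km k = S k) ∧ (Km n = i.castSucc ∨ Km n = i.succ)) ∧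
      (γ = b ∨ ∃ Kp : ℕ → Fin (l + 1), RightAsym l F c a b j γ Kp ∧
        (∀ k : Fin n, Kp k = S k) ∧ (Kp n = i.castSucc ∨ Kp n = i.succ))) := by
    classical
  -- construction of left asymptotic sequences
  have hKm : ∀ γ : ℝ, a < γ → γ ≤ b → ∃ Km : ℕ → Fin (l+1), LeftAsym l F c a b j γ Km ∧
      ∀ m : ℕ, ∃ δ > (0:ℝ), ∀ θ : ℝ, 0 < θ → θ < δ →
        γ - θ ∈ Icc a b ∧ kneadSym l F c (γ - θ) j m = Sum.inl (Km m) := by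
    intro γ hγa hγb
    choose Km δf hδfpos hδf using fun m => left_symbol hfam hmodal hnat j hγa hγb m
    refine ⟨Km, ?_, fun m => ⟨δf m, hδfpos m, hδf m⟩⟩
    intro n
    induction n with
    | zero =>
      exact ⟨γ - a, by linarith, fun θ h1 h2 =>
        ⟨⟨by linarith, by linarith⟩, fun m hm => absurd hm (Nat.not_lt_zero m)⟩⟩
    | succ n ih =>
      obtain ⟨δ₁, hδ₁pos, hδ₁⟩ := ih
      refine ⟨min δ₁ (δf n), lt_min hδ₁pos (hδfpos n), ?_⟩
      intro θ h1 h2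
      refine ⟨(hδ₁ θ h1 (lt_of_lt_of_le h2 (min_le_left _ _))).1, ?_⟩
      intro m hm
      rcases Nat.lt_or_ge m n with h | h
      · exact (hδ₁ θ h1 (lt_of_lt_of_le h2 (min_le_left _ _))).2 m h
      · have hmn : m = n := by omega
        subst hmn
        exact (hδf m θ h1 (lt_of_lt_of_le h2 (min_le_right _ _))).2
  have hKp : ∀ γ : ℝ, a ≤ γ → γ < b → ∃ Kp : ℕ → Fin (l+1), RightAsym l F c a b j γ Kp ∧
      ∀ m : ℕ, ∃ δ > (0:ℝ), ∀ θ : ℝ, 0 < θ → θ < δ →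
        γ + θ ∈ Icc a b ∧ kneadSym l F c (γ + θ) j m = Sum.inl (Kp m) := by
    intro γ hγa hγb
    choose Kp δf hδfpos hδf using fun m => right_symbol hfam hmodal hnat j hγa hγb m
    refine ⟨Kp, ?_, fun m => ⟨δf m, hδfpos m, hδf m⟩⟩
    intro n
    induction n with
    | zero =>
      exact ⟨b - γ, by linarith, fun θ h1 h2 =>
        ⟨⟨by linarith, by linarith⟩, fun m hm => absurd hm (Nat.not_lt_zero m)⟩⟩
    | succ n ih =>
      obtain ⟨δ₁, hδ₁pos, hδ₁⟩ := ih
      refine ⟨min δ₁ (δf n), lt_min hδ₁pos (hδfpos n), ?_⟩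
      intro θ h1 h2
      refine ⟨(hδ₁ θ h1 (lt_of_lt_of_le h2 (min_le_left _ _))).1, ?_⟩
      intro m hm
      rcases Nat.lt_or_ge m n with h | h
      · exact (hδ₁ θ h1 (lt_of_lt_of_le h2 (min_le_left _ _))).2 m h
      · have hmn : m = n := by omega
        subst hmn
        exact (hδf m θ h1 (lt_of_lt_of_le h2 (min_le_right _ _))).2
  refine ⟨?_, ?_, ?_, ?_⟩
  · intro γ hγ
    obtain ⟨Km, h1, -⟩ := hKm γ hγ.1 hγ.2
    exact ⟨Km, h1⟩
  · intro γ hγ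
    obtain ⟨Kp, h1, -⟩ := hKp γ hγ.1 hγ.2
    exact ⟨Kp, h1⟩
  · intro γ hγ hinl
    obtain ⟨Km, hKm1, hKm2⟩ := hKm γ hγ.1 hγ.2.le
    obtain ⟨Kp, hKp1, hKp2⟩ := hKp γ hγ.1.le hγ.2
    refine ⟨Km, Kp, hKm1, hKp1, ?_⟩
    intro m
    obtain ⟨t, ht⟩ := hinl m
    have hγIcc : γ ∈ Icc a b := ⟨hγ.1.le, hγ.2.le⟩
    obtain ⟨δ', hδ'pos, hδ'⟩ :=
      knead_loccst hfam hmodal hγIcc j m (ne_of_symAt_inl ht)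
    constructor
    · obtain ⟨δm, hδmpos, hδm⟩ := hKm2 m
      set θ := min δ' δm / 2 with hθ
      have hθpos : 0 < θ := by positivity
      have hθm : θ < δm := by
        have := min_le_right δ' δm; rw [hθ]; linarith
      have hθ' : θ < δ' := by
        have := min_le_left δ' δm; rw [hθ]; linarith
      obtain ⟨hmem, hsym⟩ := hδm θ hθpos hθm
      have habs : |γ - θ - γ| = θ := by
        rw [show γ - θ - γ = -θ by ring, abs_neg, abs_of_pos hθpos]
      have := hδ' (γ - θ) hmem (by rw [habs]; exact hθ')
      rw [hsym] at this
      exact this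
    · obtain ⟨δp, hδppos, hδp⟩ := hKp2 m
      set θ := min δ' δp / 2 with hθ
      have hθpos : 0 < θ := by positivity
      have hθm : θ < δp := by
        have := min_le_right δ' δp; rw [hθ]; linarith
      have hθ' : θ < δ' := by
        have := min_le_left δ' δp; rw [hθ]; linarith
      obtain ⟨hmem, hsym⟩ := hδp θ hθpos hθm
      have habs : |γ + θ - γ| = θ := by
        rw [show γ + θ - γ = θ by ring, abs_of_pos hθpos]
      have := hδ' (γ + θ) hmem (by rw [habs]; exact hθ')
      rw [hsym] at this
      exact this
  · intro γ hγ n S i hS hcrit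
    have heq : (F γ)^[n] (F γ (c γ j)) = c γ i := eq_of_symAt_inr hcrit
    obtain ⟨⟨hcγ, h01γ, -, -, -, -⟩, -, -⟩ := hmodal γ hγ
    have hPγ := lapPts_strictMono hcγ h01γ
    have hci : lapPts l (c γ) ⟨(i:ℕ)+1, by omega⟩ = c γ i := lapPts_mid (i:ℕ) i.isLt
    set A : ℝ := lapPts l (c γ) ⟨(i:ℕ), by omega⟩ with hAdef
    set B : ℝ := lapPts l (c γ) ⟨(i:ℕ)+2, by omega⟩ with hBdef
    have hA : A < c γ i := by rw [← hci]; exact hPγ (by simp [Fin.lt_def])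
    have hB : c γ i < B := by rw [← hci]; exact hPγ (by simp [Fin.lt_def])
    set η : ℝ := min (c γ i - A) (B - c γ i) / 3 with hηdef
    have hηpos : 0 < η := by
      rw [hηdef]
      have := lt_min (by linarith : (0:ℝ) < c γ i - A) (by linarith : (0:ℝ) < B - c γ i)
      linarith
    have hηA : A ≤ c γ i - 3 * η := by
      have := min_le_left (c γ i - A) (B - c γ i); rw [hηdef]; linarith
    have hηB : c γ i + 3 * η ≤ B := by
      have := min_le_right (c γ i - A) (B - c γ i); rw [hηdef]; linarith
    have hlapk : ∀ k : Fin l, (k:ℕ) < (i:ℕ) → c γ k ≤ A := by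
      intro k hk
      have hck : lapPts l (c γ) ⟨(k:ℕ)+1, by omega⟩ = c γ k := lapPts_mid (k:ℕ) k.isLt
      rw [← hck, hAdef]
      exact lapPts_le_of_le hcγ h01γ (by simp; omega)
    have hlapk' : ∀ k : Fin l, (i:ℕ) < (k:ℕ) → B ≤ c γ k := by
      intro k hk
      have hck : lapPts l (c γ) ⟨(k:ℕ)+1, by omega⟩ = c γ k := lapPts_mid (k:ℕ) k.isLt
      rw [← hck, hBdef]
      exact lapPts_le_of_le hcγ h01γ (by simp; omega)
    obtain ⟨δ₁, hδ₁pos, hδ₁⟩ := orbit_cont hfam hmodal hγ j n η hηpos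
    obtain ⟨δ₂, hδ₂pos, hδ₂⟩ := turning_continuous hfam hmodal hγ hηpos
    constructor
    · by_cases hγa : γ = a
      · exact Or.inl hγa
      · right
        have hγa' : a < γ := lt_of_le_of_ne hγ.1 (Ne.symm hγa)
        obtain ⟨Km, hKm1, hKm2⟩ := hKm γ hγa' hγ.2
        refine ⟨Km, hKm1, ?_, ?_⟩
        · intro k
          obtain ⟨δ', hδ'pos, hδ'⟩ :=
            knead_loccst hfam hmodal hγ j k (ne_of_symAt_inl (hS k))
          obtain ⟨δm, hδmpos, hδm⟩ := hKm2 k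
          set θ := min δ' δm / 2 with hθ
          have hθpos : 0 < θ := by positivity
          have hθm : θ < δm := by have := min_le_right δ' δm; rw [hθ]; linarith
          have hθ' : θ < δ' := by have := min_le_left δ' δm; rw [hθ]; linarith
          obtain ⟨hmem, hsym⟩ := hδm θ hθpos hθm
          have habs : |γ - θ - γ| = θ := by
            rw [show γ - θ - γ = -θ by ring, abs_neg, abs_of_pos hθpos]
          have hsym2 := hδ' (γ - θ) hmem (by rw [habs]; exact hθ')
          rw [hsym, hS k] at hsym2
          exact Sum.inl.inj hsym2
        · obtain ⟨δ₃, hδ₃pos, hδ₃⟩ := hKm2 n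
          set θ := min δ₁ (min δ₂ δ₃) / 2 with hθ
          have hθpos : 0 < θ := by positivity
          have hθ₁ : θ < δ₁ := by
            have h1 := min_le_left δ₁ (min δ₂ δ₃)
            have h2 := lt_min hδ₂pos hδ₃pos
            rw [hθ]
            rcases le_or_gt δ₁ (min δ₂ δ₃) with h|h
            · rw [min_eq_left h]; linarith
            · rw [min_eq_right h.le]
              have := lt_min hδ₂pos hδ₃pos
              linarith
          have hθ₂ : θ < δ₂ := by
            have h1 := min_le_right δ₁ (min δ₂ δ₃)
            have h2 := min_le_left δ₂ δ₃
            rw [hθ]; linarith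
          have hθ₃ : θ < δ₃ := by
            have h1 := min_le_right δ₁ (min δ₂ δ₃)
            have h2 := min_le_right δ₂ δ₃
            rw [hθ]; linarith
          obtain ⟨hmem, hsym⟩ := hδ₃ θ hθpos hθ₃
          have habs : |γ - θ - γ| = θ := by
            rw [show γ - θ - γ = -θ by ring, abs_neg, abs_of_pos hθpos]
          have hxcl : |(F (γ-θ))^[n] (F (γ-θ) (c (γ-θ) j)) - c γ i| < η := by
            have := hδ₁ (γ - θ) hmem (by rw [habs]; exact hθ₁)
            rwa [heq] at this
          have hccl : ∀ k, |c (γ-θ) k - c γ k| < η :=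
            hδ₂ (γ - θ) hmem (by rw [habs]; exact hθ₂)
          have hne' : ∀ k, (F (γ-θ))^[n] (F (γ-θ) (c (γ-θ) j)) ≠ c (γ-θ) k :=
            ne_of_symAt_inl hsym
          have hlt' : ∀ k : Fin l, (k:ℕ) < (i:ℕ) →
              c (γ-θ) k < (F (γ-θ))^[n] (F (γ-θ) (c (γ-θ) j)) := by
            intro k hk
            have h1 := hlapk k hk
            have h2 := hccl k
            rw [abs_lt] at h2 hxcl
            linarith [hxcl.1, h2.2]
          have hgt' : ∀ k : Fin l, (i:ℕ) < (k:ℕ) →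
              (F (γ-θ))^[n] (F (γ-θ) (c (γ-θ) j)) < c (γ-θ) k := by
            intro k hk
            have h1 := hlapk' k hk
            have h2 := hccl k
            rw [abs_lt] at h2 hxcl
            linarith [hxcl.2, h2.1]
          rcases symAt_near_crit i hne' hlt' hgt' with h | h
          · exact Or.inl (Sum.inl.inj (hsym.symm.trans h))
          · exact Or.inr (Sum.inl.inj (hsym.symm.trans h))
    · by_cases hγb : γ = b
      · exact Or.inl hγb
      · right
        have hγb' : γ < b := lt_of_le_of_ne hγ.2 hγb
        obtain ⟨Kp, hKp1, hKp2⟩ := hKp γ hγ.1 hγb'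
        refine ⟨Kp, hKp1, ?_, ?_⟩
        · intro k
          obtain ⟨δ', hδ'pos, hδ'⟩ :=
            knead_loccst hfam hmodal hγ j k (ne_of_symAt_inl (hS k))
          obtain ⟨δp, hδppos, hδp⟩ := hKp2 k
          set θ := min δ' δp / 2 with hθ
          have hθpos : 0 < θ := by positivity
          have hθm : θ < δp := by have := min_le_right δ' δp; rw [hθ]; linarith
          have hθ' : θ < δ' := by have := min_le_left δ' δp; rw [hθ]; linarith
          obtain ⟨hmem, hsym⟩ := hδp θ hθpos hθm
          have habs : |γ + θ - γ| = θ := by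
            rw [show γ + θ - γ = θ by ring, abs_of_pos hθpos]
          have hsym2 := hδ' (γ + θ) hmem (by rw [habs]; exact hθ')
          rw [hsym, hS k] at hsym2
          exact Sum.inl.inj hsym2
        · obtain ⟨δ₃, hδ₃pos, hδ₃⟩ := hKp2 n
          set θ := min δ₁ (min δ₂ δ₃) / 2 with hθ
          have hθpos : 0 < θ := by positivity
          have hθ₁ : θ < δ₁ := by
            have h1 := min_le_left δ₁ (min δ₂ δ₃)
            have h2 := lt_min hδ₂pos hδ₃pos
            rw [hθ]
            rcases le_or_gt δ₁ (min δ₂ δ₃) with h|h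
            · rw [min_eq_left h]; linarith
            · rw [min_eq_right h.le]
              have := lt_min hδ₂pos hδ₃pos
              linarith
          have hθ₂ : θ < δ₂ := by
            have h1 := min_le_right δ₁ (min δ₂ δ₃)
            have h2 := min_le_left δ₂ δ₃
            rw [hθ]; linarith
          have hθ₃ : θ < δ₃ := by
            have h1 := min_le_right δ₁ (min δ₂ δ₃)
            have h2 := min_le_right δ₂ δ₃
            rw [hθ]; linarith
          obtain ⟨hmem, hsym⟩ := hδ₃ θ hθpos hθ₃
          have habs : |γ + θ - γ| = θ := by
            rw [show γ + θ - γ = θ by ring, abs_of_pos hθpos]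
          have hxcl : |(F (γ+θ))^[n] (F (γ+θ) (c (γ+θ) j)) - c γ i| < η := by
            have := hδ₁ (γ + θ) hmem (by rw [habs]; exact hθ₁)
            rwa [heq] at this
          have hccl : ∀ k, |c (γ+θ) k - c γ k| < η :=
            hδ₂ (γ + θ) hmem (by rw [habs]; exact hθ₂)
          have hne' : ∀ k, (F (γ+θ))^[n] (F (γ+θ) (c (γ+θ) j)) ≠ c (γ+θ) k :=
            ne_of_symAt_inl hsym
          have hlt' : ∀ k : Fin l, (k:ℕ) < (i:ℕ) →
              c (γ+θ) k < (F (γ+θ))^[n] (F (γ+θ) (c (γ+θ) j)) := by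
            intro k hk
            have h1 := hlapk k hk
            have h2 := hccl k
            rw [abs_lt] at h2 hxcl
            linarith [hxcl.1, h2.2]
          have hgt' : ∀ k : Fin l, (i:ℕ) < (k:ℕ) →
              (F (γ+θ))^[n] (F (γ+θ) (c (γ+θ) j)) < c (γ+θ) k := by
            intro k hk
            have h1 := hlapk' k hk
            have h2 := hccl k
            rw [abs_lt] at h2 hxcl
            linarith [hxcl.2, h2.1]
          rcases symAt_near_crit i hne' hlt' hgt' with h | h
          · exact Or.inl (Sum.inl.inj (hsym.symm.trans h))
          · exact Or.inr (Sum.inl.inj (hsym.symm.trans h))
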